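/- Let n be a natural number with n > 2^{ρ(n)}, where ρ(n) is the least i such that the i-th binary digit of n is 0. Then the binomial coefficient C(n − 2^{ρ(n)}, 2^{ρ(n)}) is odd. -/

import Mathlib

/-- ρ(n) is the least bit position where `n` has binary digit 0. -/
noncomputable def rho (n : ℕ) : ℕ := sInf {i | n.testBit i = false}

lemma choose_aux : ∀ r q : ℕ, 0 < q → (q * 2 ^ (r + 1) - 1).choose (2 ^ r) % 2 = 1 := by
  intro r
  induction r with
  | zero =>
    intro q hq
    simp only [pow_zero, pow_one, Nat.choose_one_right]
    omega
  | succ r ih =>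
    intro q hq
    have hp : Fact (Nat.Prime 2) := ⟨Nat.prime_two⟩
    have key := @Choose.choose_modEq_choose_mod_mul_choose_div_nat
      (q * 2 ^ (r + 2) - 1) (2 ^ (r + 1)) 2 hp
    have hM : q * 2 ^ (r + 2) = 2 * (q * 2 ^ (r + 1)) := by ring
    have hpos : 1 ≤ q * 2 ^ (r + 1) := Nat.one_le_iff_ne_zero.mpr (by positivity)
    have hm : (q * 2 ^ (r + 2) - 1) % 2 = 1 := by omega
    have hd : (q * 2 ^ (r + 2) - 1) / 2 = q * 2 ^ (r + 1) - 1 := by omega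
    have hk : 2 ^ (r + 1) % 2 = 0 := by simp [pow_succ, Nat.mul_mod]
    have hkd : 2 ^ (r + 1) / 2 = 2 ^ r := by
      rw [pow_succ, Nat.mul_div_cancel]; omega
    rw [hm, hd, hk, hkd] at key
    have := ih q hq
    unfold Nat.ModEq at key
    simpa [Nat.mul_mod, this] using key

theorem choose_sub_pow_rho_odd (n : ℕ) (h : 2 ^ rho n < n) :
    Odd ((n - 2 ^ rho n).choose (2 ^ rho n)) := by
  set r := rho n with hr
  have hne : {i | n.testBit i = false}.Nonempty :=
    ⟨n, Nat.testBit_eq_false_of_lt (Nat.lt_two_pow_self (n := n))⟩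
  have hrmem : n.testBit r = false := by
    have := Nat.sInf_mem hne
    simpa [hr, rho] using this
  have hlt : ∀ i < r, n.testBit i = true := by
    intro i hi
    by_contra hfalse
    have hmem : i ∈ {i | n.testBit i = false} := by simpa using hfalse
    exact Nat.notMem_of_lt_sInf (by simpa [hr, rho] using hi) hmem
  have hmod : n % 2 ^ (r + 1) = 2 ^ r - 1 := by
    apply Nat.eq_of_testBit_eq
    intro i
    rw [Nat.testBit_mod_two_pow, Nat.testBit_two_pow_sub_one]
    rcases lt_trichotomy i r with hi | hi | hi
    · simp [hi, hlt i hi, Nat.lt_succ_of_lt hi]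
    · simp [hi, hrmem]
    · have h1 : ¬ i < r := by omega
      have h2 : ¬ i < r + 1 := by omega
      simp [h1, h2]
  set q := n / 2 ^ (r + 1) with hq
  have hn := (Nat.div_add_mod n (2 ^ (r + 1))).symm
  rw [hmod, ← hq] at hn
  have hpr : 1 ≤ 2 ^ r := Nat.one_le_two_pow
  have hqpos : 0 < q := by
    rcases Nat.eq_zero_or_pos q with h0 | h0
    · rw [h0] at hn; omega
    · exact h0
  have hsub : n - 2 ^ r = q * 2 ^ (r + 1) - 1 := by
    have hM : q * 2 ^ (r + 1) = 2 ^ (r + 1) * q := mul_comm _ _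
    have : 1 ≤ q * 2 ^ (r + 1) := Nat.one_le_iff_ne_zero.mpr (by positivity)
    omega
  rw [hsub, Nat.odd_iff]
  exact choose_aux r q hqpos
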